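/- For all probability distributions P, Q ∈ Γ_n, the relative arithmetic–geometric divergence satisfies G(P||Q) := ∑((p_i+q_i)/2)·ln((p_i+q_i)/(2p_i)) ≤ (1/2)[χ²(Q||P) − D(Q||P)], where χ²(Q||P) = ∑(q_i−p_i)²/p_i and D(Q||P) = ∑(q_i−p_i)·ln((p_i+q_i)/(2p_i)). -/
import Mathlib


theorem relAG_upper_bound (n : ℕ) (hn : 2 ≤ n) (p q : Fin n → ℝ)
    (hp : ∀ i, 0 < p i) (hq : ∀ i, 0 < q i)
    (hps : ∑ i, p i = 1) (hqs : ∑ i, q i = 1) :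
    (∑ i, ((p i + q i) / 2) * Real.log ((p i + q i) / (2 * p i))) ≤
      (1 / 2) * ((∑ i, (q i - p i) ^ 2 / p i) -
        ∑ i, (q i - p i) * Real.log ((p i + q i) / (2 * p i))) := by
  have hsum : ∑ i, q i * Real.log ((p i + q i) / (2 * p i)) ≤
      ∑ i, ((q i - p i) ^ 2 / p i / 2 + (q i - p i) / 2) := by
    apply Finset.sum_le_sum
    intro i _
    have hpi := hp i
    have hqi := hq i
    have hpos : 0 < (p i + q i) / (2 * p i) := by positivity
    have h1 := Real.log_le_sub_one_of_pos hpos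
    calc q i * Real.log ((p i + q i) / (2 * p i))
        ≤ q i * ((p i + q i) / (2 * p i) - 1) :=
          mul_le_mul_of_nonneg_left h1 hqi.le
      _ = (q i - p i) ^ 2 / p i / 2 + (q i - p i) / 2 := by
          field_simp; ring
  have hexp : ∑ i, ((q i - p i) ^ 2 / p i / 2 + (q i - p i) / 2) =
      (∑ i, (q i - p i) ^ 2 / p i) / 2 := by
    rw [Finset.sum_add_distrib]
    have h1 : ∑ i, (q i - p i) ^ 2 / p i / 2 = (∑ i, (q i - p i) ^ 2 / p i) / 2 := by
      rw [Finset.sum_div]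
    have h2 : ∑ i, (q i - p i) / 2 = 0 := by
      rw [← Finset.sum_div]
      simp [Finset.sum_sub_distrib, hps, hqs]
    rw [h1, h2, add_zero]
  have hA : (∑ i, ((p i + q i) / 2) * Real.log ((p i + q i) / (2 * p i))) +
      (1 / 2) * ∑ i, (q i - p i) * Real.log ((p i + q i) / (2 * p i)) =
      ∑ i, q i * Real.log ((p i + q i) / (2 * p i)) := by
    rw [Finset.mul_sum, ← Finset.sum_add_distrib]
    exact Finset.sum_congr rfl fun i _ => by ring
  linarith [hsum, hexp.symm ▸ hsum]
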